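/- Fix N ≥ 2 and an index i with 0 ≤ i ≤ N−2. Let q₀,…,q_{N−1} and e be elements of a field with e + q_{i+1} ≠ 0. Define ẽ = e·q_i/(e + q_{i+1}), q̃_i = q_{i+1}·q_i/(e + q_{i+1}), q̃_{i+1} = e + q_{i+1}, and q̃_l = q_l for l ≠ i, i+1. Then the matrix identity (I_N + e·E_{i+2,i+1})·R(q) = R(q̃)·(I_N + ẽ·E_{i+2,i+1}) holds, where R(q) is the upper bidiagonal matrix with diagonal entries q₀,…,q_{N−1} and superdiagonal entries 1. -/

import Mathlib

/-- one-step birational transformation as a matrix identity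
`(I + e·E_{i+2,i+1}) R(q) = R(q̃) (I + ẽ·E_{i+2,i+1})`. -/
theorem stmt_3 {F : Type*} [Field F] (N : ℕ) (hN : 2 ≤ N) (i : ℕ) (hi : i ≤ N - 2)
    (q : Fin N → F) (e : F)
    (he : e + q ⟨i + 1, by omega⟩ ≠ 0) :
    let R : (Fin N → F) → Matrix (Fin N) (Fin N) F := fun p =>
      Matrix.of fun a b => if a = b then p a else if (b : ℕ) = (a : ℕ) + 1 then 1 else 0
    let ii : Fin N := ⟨i, by omega⟩
    let jj : Fin N := ⟨i + 1, by omega⟩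
    let etil : F := e * q ii / (e + q jj)
    let qtil : Fin N → F := fun l =>
      if l = ii then q jj * q ii / (e + q jj)
      else if l = jj then e + q jj
      else q l
    (1 + Matrix.single jj ii e) * R q
      = R qtil * (1 + Matrix.single jj ii etil) := by
  intro R ii jj etil qtil
  have hij : ii ≠ jj := by simp [ii, jj, Fin.ext_iff]
  ext a b
  simp only [Matrix.add_mul, Matrix.mul_add, Matrix.one_mul, Matrix.mul_one, Matrix.add_apply]
  rcases eq_or_ne a jj with ha | ha <;> rcases eq_or_ne b ii with hb | hb
  · subst ha hb
    simp only [Matrix.single_mul_apply_same,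
      Matrix.mul_single_apply_same]
    simp only [R, qtil, etil, ii, jj, Matrix.of_apply, Fin.ext_iff]
    simp
    field_simp
  · subst ha
    simp only [Matrix.single_mul_apply_same,
      Matrix.mul_single_apply_of_ne _ _ _ _ _ hb]
    rcases eq_or_ne b jj with hbj | hbj
    · subst hbj
      simp only [R, qtil, etil, ii, jj, Matrix.of_apply, Fin.ext_iff]
      simp
      ring
    · have h1 : (b : ℕ) ≠ i := fun h => hb (Fin.ext h)
      have h2 : (b : ℕ) ≠ i + 1 := fun h => hbj (Fin.ext h)
      simp only [R, qtil, etil, ii, jj, Matrix.of_apply, Fin.ext_iff]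
      simp [h1, h2, Ne.symm h1, Ne.symm h2]
  · subst hb
    simp only [Matrix.single_mul_apply_of_ne _ _ _ _ _ ha,
      Matrix.mul_single_apply_same]
    rcases eq_or_ne a ii with hai | hai
    · subst hai
      simp only [R, qtil, etil, ii, jj, Matrix.of_apply, Fin.ext_iff]
      simp
      field_simp
      ring
    · have h1 : (a : ℕ) ≠ i := fun h => hai (Fin.ext h)
      have h2 : (a : ℕ) ≠ i + 1 := fun h => ha (Fin.ext h)
      have h4 : i + 1 ≠ (a : ℕ) + 1 := by omega
      simp only [R, qtil, etil, ii, jj, Matrix.of_apply, Fin.ext_iff]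
      simp [h1, h2, h4, Ne.symm h1]
  · simp only [Matrix.single_mul_apply_of_ne _ _ _ _ _ ha,
      Matrix.mul_single_apply_of_ne _ _ _ _ _ hb]
    have h2 : (a : ℕ) ≠ i + 1 := fun h => ha (Fin.ext h)
    have hbne : (b : ℕ) ≠ i := fun h => hb (Fin.ext h)
    simp only [R, qtil, etil, ii, jj, Matrix.of_apply, Fin.ext_iff]
    rcases eq_or_ne (a : ℕ) i with hai | hai
    · simp [hai, hbne, Ne.symm hbne]
    · simp [hai, h2]
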